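/- Let V be a variety with 0⃗ & 1⃗ having the Determining Property, and let A₀, A₁ ∈ V. If [e⃗₀, e⃗₁] is a central element of A₀ × A₁, then e⃗_i is a central element of A_i for i = 0, 1. -/
import Mathlib


open FirstOrder Language

universe u v w

namespace Paper

variable {L : FirstOrder.Language.{v, w}}

/-- The direct product of two `L`-structures, with pointwise operations. -/
instance prodStructure (A : Type*) (B : Type*) [L.Structure A] [L.Structure B] :
    L.Structure (A × B) where
  funMap f x := (Structure.funMap f fun i => (x i).1, Structure.funMap f fun i => (x i).2)
  RelMap r x := Structure.RelMap r (fun i => (x i).1) ∧ Structure.RelMap r fun i => (x i).2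

/-- The interpretation of a closed term in an algebra. -/
def interp (A : Type u) [L.Structure A] (t : L.Term Empty) : A := t.realize Empty.elim

/-- A congruence of an `L`-structure: an equivalence relation compatible with all
basic operations. -/
structure Congruence (L : FirstOrder.Language.{v, w}) (A : Type u) [L.Structure A] where
  rel : A → A → Prop
  refl : ∀ a, rel a a
  symm : ∀ {a b}, rel a b → rel b a
  trans : ∀ {a b c}, rel a b → rel b c → rel a c
  compat : ∀ {n} (f : L.Functions n) (x y : Fin n → A),
    (∀ i, rel (x i) (y i)) → rel (Structure.funMap f x) (Structure.funMap f y)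

variable {A : Type u} [L.Structure A]

/-- `θ ⋄ θ* = Δ` : `θ ∩ θ* = Δ` and `θ ∘ θ* = ∇`. -/
def Complementary (θ θ' : Congruence L A) : Prop :=
  (∀ a b : A, θ.rel a b → θ'.rel a b → a = b) ∧ ∀ a b : A, ∃ c : A, θ.rel a c ∧ θ'.rel c b

/-- A factor congruence: the kernel of a projection onto a direct factor,
equivalently a congruence possessing a complementary factor congruence. -/
def IsFactorCongruence (θ : Congruence L A) : Prop := ∃ θ' : Congruence L A, Complementary θ θ'

/-- The meet of two congruences. -/
def Congruence.inf (θ φ : Congruence L A) : Congruence L A where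
  rel a b := θ.rel a b ∧ φ.rel a b
  refl a := ⟨θ.refl a, φ.refl a⟩
  symm h := ⟨θ.symm h.1, φ.symm h.2⟩
  trans h h' := ⟨θ.trans h.1 h'.1, φ.trans h.2 h'.2⟩
  compat f x y h := ⟨θ.compat f x y fun i => (h i).1, φ.compat f x y fun i => (h i).2⟩

/-- The order on congruences. -/
def Congruence.le (θ φ : Congruence L A) : Prop := ∀ a b : A, θ.rel a b → φ.rel a b

/-- The join of two congruences in the congruence lattice. -/
def Congruence.sup (θ φ : Congruence L A) : Congruence L A where
  rel a b := ∀ ψ : Congruence L A, θ.le ψ → φ.le ψ → ψ.rel a b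
  refl a ψ _ _ := ψ.refl a
  symm h ψ h1 h2 := ψ.symm (h ψ h1 h2)
  trans h h' ψ h1 h2 := ψ.trans (h ψ h1 h2) (h' ψ h1 h2)
  compat f x y h ψ h1 h2 := ψ.compat f x y fun i => h i ψ h1 h2

/-- A theory is equational when each axiom is a universally quantified equation. -/
def IsEquational (T : L.Theory) : Prop :=
  ∀ φ ∈ T, ∃ (n : ℕ) (t₁ t₂ : L.Term (Empty ⊕ Fin n)), φ = (t₁.bdEqual t₂).alls

/-- `Mod(T)` is a variety with `0⃗` & `1⃗`, witnessed by closed terms `z`, `o`. -/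
def HasZeroOne (T : L.Theory) {l : ℕ} (z o : Fin l → L.Term Empty) : Prop :=
  ∀ (A : Type u) [L.Structure A], A ⊨ T → Nonempty A →
    (∀ i, interp A (z i) = interp A (o i)) → ∀ x y : A, x = y

variable {l : ℕ} (z o : Fin l → L.Term Empty)

/-- `0⃗ θ e⃗ θ* 1⃗`. -/
def Between (θ θ' : Congruence L A) (e : Fin l → A) : Prop :=
  (∀ i, θ.rel (interp A (z i)) (e i)) ∧ ∀ i, θ'.rel (e i) (interp A (o i))

/-- `e⃗` is a central element of `A`. -/
def IsCentral (e : Fin l → A) : Prop :=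
  ∃ (A₁ : Type u) (A₂ : Type u) (_ : L.Structure A₁) (_ : L.Structure A₂)
    (g : A ≃[L] A₁ × A₂), ∀ i, g (e i) = (interp A₁ (z i), interp A₂ (o i))

/-- `e⃗` and `f⃗` are complementary central elements of `A`. -/
def AreComplementaryCentral (e f : Fin l → A) : Prop :=
  ∃ (A₁ : Type u) (A₂ : Type u) (_ : L.Structure A₁) (_ : L.Structure A₂)
    (g : A ≃[L] A₁ × A₂),
      (∀ i, g (e i) = (interp A₁ (z i), interp A₂ (o i))) ∧
      (∀ i, g (f i) = (interp A₁ (o i), interp A₂ (z i)))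

variable (T : L.Theory)

/-- The Determining Property. -/
def HasDeterminingProperty : Prop :=
  ∀ (A : Type u) [L.Structure A], A ⊨ T → Nonempty A →
    (∀ θ θ' : Congruence L A, Complementary θ θ' → ∃! e : Fin l → A, Between z o θ θ' e) ∧
    (∀ (θ θ' : Congruence L A) (e : Fin l → A), Complementary θ θ' → Between z o θ θ' e →
      IsCentral z o e) ∧
    (∀ e : Fin l → A, IsCentral z o e →
      ∃! p : Congruence L A × Congruence L A, Complementary p.1 p.2 ∧ Between z o p.1 p.2 e)

/-- The Weak Determining Property. -/
def HasWeakDeterminingProperty : Prop :=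
  ∀ (A : Type u) [L.Structure A], A ⊨ T → Nonempty A →
    (∀ θ θ' : Congruence L A, Complementary θ θ' →
      ∃! p : (Fin l → A) × (Fin l → A), Between z o θ θ' p.1 ∧ Between o z θ θ' p.2) ∧
    (∀ (θ θ' : Congruence L A) (e f : Fin l → A), Complementary θ θ' →
      Between z o θ θ' e → Between o z θ θ' f → AreComplementaryCentral z o e f) ∧
    (∀ e f : Fin l → A, AreComplementaryCentral z o e f →
      ∃! p : Congruence L A × Congruence L A,
        Complementary p.1 p.2 ∧ Between z o p.1 p.2 e ∧ Between o z p.1 p.2 f)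

/-- Definable Factor Congruences. -/
def HasDFC : Prop :=
  ∃ Φ : L.Formula (Fin 2 ⊕ Fin l),
    ∀ (A : Type u) (B : Type u) [L.Structure A] [L.Structure B],
      A ⊨ T → B ⊨ T → Nonempty A → Nonempty B →
        ∀ (a c : A) (b d : B),
          Φ.Realize (Sum.elim (![((a, b) : A × B), (c, d)])
            fun i => ((interp A (z i), interp B (o i)) : A × B)) ↔ a = c

/-- Definability with both `[0⃗,1⃗]` and `[1⃗,0⃗]` as parameters. -/
def HasDFC' : Prop :=
  ∃ Φ : L.Formula (Fin 2 ⊕ (Fin l ⊕ Fin l)),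
    ∀ (A : Type u) (B : Type u) [L.Structure A] [L.Structure B],
      A ⊨ T → B ⊨ T → Nonempty A → Nonempty B →
        ∀ (a c : A) (b d : B),
          Φ.Realize (Sum.elim (![((a, b) : A × B), (c, d)])
            (Sum.elim (fun i => ((interp A (z i), interp B (o i)) : A × B))
              fun i => ((interp A (o i), interp B (z i)) : A × B))) ↔ a = c

/-- Boolean Factor Congruences. -/
def HasBFC : Prop :=
  ∀ (A : Type u) [L.Structure A], A ⊨ T → Nonempty A →
    (∀ θ φ : Congruence L A, IsFactorCongruence θ → IsFactorCongruence φ →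
      IsFactorCongruence (θ.inf φ) ∧ IsFactorCongruence (θ.sup φ)) ∧
    (∀ θ φ ψ : Congruence L A, IsFactorCongruence θ → IsFactorCongruence φ →
      IsFactorCongruence ψ →
        (θ.inf (φ.sup ψ)).rel = ((θ.inf φ).sup (θ.inf ψ)).rel)

end Paper

namespace Paper

variable {L : FirstOrder.Language.{v, w}}

theorem prod_funMap {A B : Type u} [L.Structure A] [L.Structure B] {n : ℕ}
    (f : L.Functions n) (x : Fin n → A × B) :
    (Structure.funMap f x : A × B) =
      (Structure.funMap f fun i => (x i).1, Structure.funMap f fun i => (x i).2) := rfl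

theorem prod_term_realize {A B : Type u} [L.Structure A] [L.Structure B]
    {α : Type*} (t : L.Term α) (v : α → A × B) :
    t.realize v = (t.realize fun a => (v a).1, t.realize fun a => (v a).2) := by
  induction t with
  | var => rfl
  | func f ts ih =>
    simp only [Term.realize_func, prod_funMap, ih]

theorem prod_interp {A B : Type u} [L.Structure A] [L.Structure B] (t : L.Term Empty) :
    interp (A × B) t = (interp A t, interp B t) := by
  unfold interp
  rw [prod_term_realize]
  exact Prod.ext (congrArg (fun v => t.realize v) (funext fun e => e.elim))
    (congrArg (fun v => t.realize v) (funext fun e => e.elim))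

theorem empty_val_eq {M : Type*} {n : ℕ} (v w : Empty ⊕ (Fin n) → M)
    (h : ∀ i, v (Sum.inr i) = w (Sum.inr i)) : v = w :=
  funext fun a => by cases a with
    | inl e => exact e.elim
    | inr i => exact h i

theorem prod_model {A B : Type u} [L.Structure A] [L.Structure B] {T : L.Theory}
    (hT : IsEquational T) (hA : A ⊨ T) (hB : B ⊨ T) : (A × B) ⊨ T := by
  rw [Theory.model_iff]
  intro φ hφ
  obtain ⟨n, t₁, t₂, rfl⟩ := hT φ hφ
  haveI := hA
  haveI := hB
  have hA' : A ⊨ (t₁.bdEqual t₂).alls := T.realize_sentence_of_mem hφ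
  have hB' : B ⊨ (t₁.bdEqual t₂).alls := T.realize_sentence_of_mem hφ
  simp only [Sentence.Realize, BoundedFormula.realize_alls,
    BoundedFormula.realize_bdEqual] at hA' hB' ⊢
  intro xs
  rw [prod_term_realize, prod_term_realize]
  refine Prod.ext ?_ ?_
  · have e1 : (fun a => ((Sum.elim (default : Empty → A × B) xs) a).1)
        = Sum.elim (default : Empty → A) (fun i => (xs i).1) :=
      empty_val_eq _ _ fun i => rfl
    rw [e1]
    exact hA' _
  · have e1 : (fun a => ((Sum.elim (default : Empty → A × B) xs) a).2)
        = Sum.elim (default : Empty → B) (fun i => (xs i).2) :=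
      empty_val_eq _ _ fun i => rfl
    rw [e1]
    exact hB' _

/-- The product of two congruences. -/
def Congruence.prod {A B : Type u} [L.Structure A] [L.Structure B]
    (θ : Congruence L A) (φ : Congruence L B) : Congruence L (A × B) where
  rel p q := θ.rel p.1 q.1 ∧ φ.rel p.2 q.2
  refl p := ⟨θ.refl _, φ.refl _⟩
  symm h := ⟨θ.symm h.1, φ.symm h.2⟩
  trans h h' := ⟨θ.trans h.1 h'.1, φ.trans h.2 h'.2⟩
  compat f x y h := ⟨θ.compat f _ _ fun i => (h i).1, φ.compat f _ _ fun i => (h i).2⟩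

/-- The "twist" of θ×θ along the swap of the two `A₁`-coordinates of `(A₀×A₁)×(A₀×A₁)`. -/
def Congruence.twist {A₀ A₁ : Type u} [L.Structure A₀] [L.Structure A₁]
    (θ : Congruence L (A₀ × A₁)) : Congruence L ((A₀ × A₁) × (A₀ × A₁)) where
  rel p q := θ.rel (p.1.1, p.2.2) (q.1.1, q.2.2) ∧ θ.rel (p.2.1, p.1.2) (q.2.1, q.1.2)
  refl p := ⟨θ.refl _, θ.refl _⟩
  symm h := ⟨θ.symm h.1, θ.symm h.2⟩
  trans h h' := ⟨θ.trans h.1 h'.1, θ.trans h.2 h'.2⟩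
  compat f x y h :=
    ⟨θ.compat f (fun i => ((x i).1.1, (x i).2.2)) (fun i => ((y i).1.1, (y i).2.2))
        (fun i => (h i).1),
     θ.compat f (fun i => ((x i).2.1, (x i).1.2)) (fun i => ((y i).2.1, (y i).1.2))
        (fun i => (h i).2)⟩

/-- Restriction of a product congruence to the first coordinate. -/
def Congruence.fstRestrict {A B : Type u} [L.Structure A] [L.Structure B]
    (θ : Congruence L (A × B))
    (key : ∀ (a b : A) (x y : B), θ.rel (a, x) (b, y) → ∀ w, θ.rel (a, w) (b, w)) :
    Congruence L A where
  rel a b := ∀ x, θ.rel (a, x) (b, x)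
  refl a x := θ.refl _
  symm h x := θ.symm (h x)
  trans h h' x := θ.trans (h x) (h' x)
  compat f u v h x :=
    key _ _ _ _ (θ.compat f (fun i => (u i, x)) (fun i => (v i, x)) fun i => h i x) x

/-- Restriction of a product congruence to the second coordinate. -/
def Congruence.sndRestrict {A B : Type u} [L.Structure A] [L.Structure B]
    (θ : Congruence L (A × B))
    (key : ∀ (a b : A) (x y : B), θ.rel (a, x) (b, y) → ∀ c, θ.rel (c, x) (c, y)) :
    Congruence L B where
  rel x y := ∀ a, θ.rel (a, x) (a, y)
  refl x a := θ.refl _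
  symm h a := θ.symm (h a)
  trans h h' a := θ.trans (h a) (h' a)
  compat f u v h a :=
    key _ _ _ _ (θ.compat f (fun i => (a, u i)) (fun i => (a, v i)) fun i => h i a) a

end Paper


/-- **Corollary 4.2.** In a variety with `0⃗` & `1⃗` having the Determining
Property, if `[e⃗₀, e⃗₁]` is a central element of `A₀ × A₁`, then each `e⃗ᵢ` is a
central element of `Aᵢ`. -/
theorem central_of_prod_central {L : FirstOrder.Language.{v, w}}
    (T : L.Theory) (hT : Paper.IsEquational T) {l : ℕ} (z o : Fin l → L.Term Empty)
    (h01 : Paper.HasZeroOne.{u} T z o)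
    (hDet : Paper.HasDeterminingProperty.{u} z o T)
    (A₀ : Type u) (A₁ : Type u) [L.Structure A₀] [L.Structure A₁]
    (h₀ : A₀ ⊨ T) (h₁ : A₁ ⊨ T) (hne₀ : Nonempty A₀) (hne₁ : Nonempty A₁)
    (e : Fin l → A₀ × A₁) (he : Paper.IsCentral z o e) :
    Paper.IsCentral z o (fun i => (e i).1) ∧ Paper.IsCentral z o (fun i => (e i).2) := by
  classical
  have hneP : Nonempty (A₀ × A₁) := ⟨(Classical.choice hne₀, Classical.choice hne₁)⟩
  have hneQ : Nonempty ((A₀ × A₁) × (A₀ × A₁)) := ⟨(Classical.choice hneP, Classical.choice hneP)⟩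
  have hP : (A₀ × A₁) ⊨ T := Paper.prod_model hT h₀ h₁
  have hQ : ((A₀ × A₁) × (A₀ × A₁)) ⊨ T := Paper.prod_model hT hP hP
  obtain ⟨⟨θ, θ'⟩, ⟨hcomp, hbet⟩, -⟩ := (hDet (A₀ × A₁) hP hneP).2.2 e he
  have hz : ∀ i, Paper.interp (A₀ × A₁) (z i)
      = (Paper.interp A₀ (z i), Paper.interp A₁ (z i)) := fun i => Paper.prod_interp (z i)
  have ho : ∀ i, Paper.interp (A₀ × A₁) (o i)
      = (Paper.interp A₀ (o i), Paper.interp A₁ (o i)) := fun i => Paper.prod_interp (o i)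
  have hzQ : ∀ i, Paper.interp ((A₀ × A₁) × (A₀ × A₁)) (z i)
      = (Paper.interp (A₀ × A₁) (z i), Paper.interp (A₀ × A₁) (z i)) :=
    fun i => Paper.prod_interp (z i)
  have hoQ : ∀ i, Paper.interp ((A₀ × A₁) × (A₀ × A₁)) (o i)
      = (Paper.interp (A₀ × A₁) (o i), Paper.interp (A₀ × A₁) (o i)) :=
    fun i => Paper.prod_interp (o i)
  -- the product pair on Q = P × P
  have hcompΘ : Paper.Complementary (θ.prod θ) (θ'.prod θ') := by
    constructor
    · rintro ⟨p1, p2⟩ ⟨q1, q2⟩ ⟨h1, h2⟩ ⟨h1', h2'⟩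
      exact Prod.ext (hcomp.1 _ _ h1 h1') (hcomp.1 _ _ h2 h2')
    · rintro ⟨p1, p2⟩ ⟨q1, q2⟩
      obtain ⟨c1, hc1, hc1'⟩ := hcomp.2 p1 q1
      obtain ⟨c2, hc2, hc2'⟩ := hcomp.2 p2 q2
      exact ⟨(c1, c2), ⟨hc1, hc2⟩, ⟨hc1', hc2'⟩⟩
  have hbetΘ : Paper.Between z o (θ.prod θ) (θ'.prod θ') (fun i => (e i, e i)) := by
    refine ⟨fun i => ⟨?_, ?_⟩, fun i => ⟨?_, ?_⟩⟩
    · have h1 : (Paper.interp ((A₀ × A₁) × (A₀ × A₁)) (z i)).1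
          = Paper.interp (A₀ × A₁) (z i) := by rw [hzQ i]
      rw [h1]; exact hbet.1 i
    · have h1 : (Paper.interp ((A₀ × A₁) × (A₀ × A₁)) (z i)).2
          = Paper.interp (A₀ × A₁) (z i) := by rw [hzQ i]
      rw [h1]; exact hbet.1 i
    · have h1 : (Paper.interp ((A₀ × A₁) × (A₀ × A₁)) (o i)).1
          = Paper.interp (A₀ × A₁) (o i) := by rw [hoQ i]
      show θ'.rel (e i) _
      rw [h1]; exact hbet.2 i
    · have h1 : (Paper.interp ((A₀ × A₁) × (A₀ × A₁)) (o i)).2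
          = Paper.interp (A₀ × A₁) (o i) := by rw [hoQ i]
      show θ'.rel (e i) _
      rw [h1]; exact hbet.2 i
  have hcent : Paper.IsCentral z o (fun i => ((e i, e i) : (A₀ × A₁) × (A₀ × A₁))) :=
    (hDet _ hQ hneQ).2.1 _ _ _ hcompΘ hbetΘ
  -- the twisted pair on Q
  have hcompΘs : Paper.Complementary θ.twist θ'.twist := by
    constructor
    · rintro ⟨⟨a, x⟩, ⟨b, y⟩⟩ ⟨⟨a', x'⟩, ⟨b', y'⟩⟩ ⟨h1, h2⟩ ⟨h1', h2'⟩
      obtain ⟨ha, hy⟩ := Prod.ext_iff.1 (hcomp.1 _ _ h1 h1')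
      obtain ⟨hb, hx⟩ := Prod.ext_iff.1 (hcomp.1 _ _ h2 h2')
      cases ha; cases hy; cases hb; cases hx; rfl
    · rintro ⟨⟨a, x⟩, ⟨b, y⟩⟩ ⟨⟨a', x'⟩, ⟨b', y'⟩⟩
      obtain ⟨d, hd, hd'⟩ := hcomp.2 (a, y) (a', y')
      obtain ⟨d2, hd2, hd2'⟩ := hcomp.2 (b, x) (b', x')
      exact ⟨((d.1, d2.2), (d2.1, d.2)), ⟨hd, hd2⟩, ⟨hd', hd2'⟩⟩
  have hbetΘs : Paper.Between z o θ.twist θ'.twist (fun i => (e i, e i)) := by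
    refine ⟨fun i => ⟨?_, ?_⟩, fun i => ⟨?_, ?_⟩⟩
    · have h1 : ((Paper.interp ((A₀ × A₁) × (A₀ × A₁)) (z i)).1.1,
          (Paper.interp ((A₀ × A₁) × (A₀ × A₁)) (z i)).2.2)
          = Paper.interp (A₀ × A₁) (z i) := by rw [hzQ i]
      rw [h1]; exact hbet.1 i
    · have h1 : ((Paper.interp ((A₀ × A₁) × (A₀ × A₁)) (z i)).2.1,
          (Paper.interp ((A₀ × A₁) × (A₀ × A₁)) (z i)).1.2)
          = Paper.interp (A₀ × A₁) (z i) := by rw [hzQ i]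
      rw [h1]; exact hbet.1 i
    · have h1 : ((Paper.interp ((A₀ × A₁) × (A₀ × A₁)) (o i)).1.1,
          (Paper.interp ((A₀ × A₁) × (A₀ × A₁)) (o i)).2.2)
          = Paper.interp (A₀ × A₁) (o i) := by rw [hoQ i]
      show θ'.rel (e i) _
      rw [h1]; exact hbet.2 i
    · have h1 : ((Paper.interp ((A₀ × A₁) × (A₀ × A₁)) (o i)).2.1,
          (Paper.interp ((A₀ × A₁) × (A₀ × A₁)) (o i)).1.2)
          = Paper.interp (A₀ × A₁) (o i) := by rw [hoQ i]
      show θ'.rel (e i) _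
      rw [h1]; exact hbet.2 i
  -- uniqueness of the pair associated with the central element [e,e]
  obtain ⟨p, hp, hup⟩ := (hDet _ hQ hneQ).2.2 (fun i => (e i, e i)) hcent
  have hpair : ((θ.prod θ), (θ'.prod θ')) = (θ.twist, θ'.twist) :=
    (hup _ ⟨hcompΘ, hbetΘ⟩).trans (hup _ ⟨hcompΘs, hbetΘs⟩).symm
  have hθrel : (θ.prod θ).rel = θ.twist.rel :=
    congrArg Paper.Congruence.rel (congrArg Prod.fst hpair)
  have hθ'rel : (θ'.prod θ').rel = θ'.twist.rel :=
    congrArg Paper.Congruence.rel (congrArg Prod.snd hpair)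
  -- key: θ and θ' are product congruences
  have key : ∀ (a b : A₀) (x y : A₁), θ.rel (a, x) (b, y) →
      ∀ (c : A₀) (w : A₁), θ.rel (a, w) (b, w) ∧ θ.rel (c, x) (c, y) := by
    intro a b x y h c w
    have h2 := congrFun (congrFun hθrel ((a, x), (c, w))) ((b, y), (c, w))
    have hL : (θ.prod θ).rel ((a, x), (c, w)) ((b, y), (c, w)) := ⟨h, θ.refl _⟩
    have hR : θ.twist.rel ((a, x), (c, w)) ((b, y), (c, w)) := h2 ▸ hL
    exact hR
  have key' : ∀ (a b : A₀) (x y : A₁), θ'.rel (a, x) (b, y) →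
      ∀ (c : A₀) (w : A₁), θ'.rel (a, w) (b, w) ∧ θ'.rel (c, x) (c, y) := by
    intro a b x y h c w
    have h2 := congrFun (congrFun hθ'rel ((a, x), (c, w))) ((b, y), (c, w))
    have hL : (θ'.prod θ').rel ((a, x), (c, w)) ((b, y), (c, w)) := ⟨h, θ'.refl _⟩
    have hR : θ'.twist.rel ((a, x), (c, w)) ((b, y), (c, w)) := h2 ▸ hL
    exact hR
  -- restricted congruences
  have x₀ : A₁ := Classical.choice hne₁
  have a₀ : A₀ := Classical.choice hne₀
  set θ₀ := θ.fstRestrict (fun a b x y h w => (key a b x y h a w).1) with hθ₀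
  set θ₀' := θ'.fstRestrict (fun a b x y h w => (key' a b x y h a w).1) with hθ₀'
  set θ₁ := θ.sndRestrict (fun a b x y h c => (key a b x y h c x).2) with hθ₁
  set θ₁' := θ'.sndRestrict (fun a b x y h c => (key' a b x y h c x).2) with hθ₁'
  constructor
  · refine (hDet A₀ h₀ hne₀).2.1 θ₀ θ₀' _ ⟨?_, ?_⟩ ⟨?_, ?_⟩
    · intro a b h h'
      exact congrArg Prod.fst (hcomp.1 (a, x₀) (b, x₀) (h x₀) (h' x₀))
    · intro a b
      obtain ⟨c, hc, hc'⟩ := hcomp.2 (a, x₀) (b, x₀)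
      exact ⟨c.1, fun w => (key a c.1 x₀ c.2 hc a w).1,
        fun w => (key' c.1 b c.2 x₀ hc' a w).1⟩
    · intro i w
      have hb := hbet.1 i
      rw [hz i] at hb
      exact (key _ _ _ _ hb a₀ w).1
    · intro i w
      have hb := hbet.2 i
      rw [ho i] at hb
      exact (key' _ _ _ _ hb a₀ w).1
  · refine (hDet A₁ h₁ hne₁).2.1 θ₁ θ₁' _ ⟨?_, ?_⟩ ⟨?_, ?_⟩
    · intro x y h h'
      exact congrArg Prod.snd (hcomp.1 (a₀, x) (a₀, y) (h a₀) (h' a₀))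
    · intro x y
      obtain ⟨c, hc, hc'⟩ := hcomp.2 (a₀, x) (a₀, y)
      exact ⟨c.2, fun a => (key a₀ c.1 x c.2 hc a x₀).2,
        fun a => (key' c.1 a₀ c.2 y hc' a x₀).2⟩
    · intro i a
      have hb := hbet.1 i
      rw [hz i] at hb
      exact (key _ _ _ _ hb a x₀).2
    · intro i a
      have hb := hbet.2 i
      rw [ho i] at hb
      exact (key' _ _ _ _ hb a x₀).2
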